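/- Let R be a commutative noetherian ring and let W₁, W₂ be specialization closed subsets of Spec(R). For an R-module M, the following are equivalent: (i) Supp_R(M) ⊆ W₁ ∪ W₂; (ii) there exists a submodule N of M such that Supp_R(N) ⊆ W₁ and Supp_R(M/N) ⊆ W₂. -/

import Mathlib

open LocalizedModule in
lemma key_assoc {R : Type*} [CommRing R] [IsNoetherianRing R]
    {Q : Type*} [AddCommGroup Q] [Module R Q] (p : PrimeSpectrum R)
    (hp : p ∈ Module.support R Q) :
    ∃ (q : Ideal R) (y : Q), q.IsPrime ∧ q ≤ p.asIdeal ∧ (∀ r : R, r • y = 0 ↔ r ∈ q) := by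
  classical
  set S := p.asIdeal.primeCompl with hS
  let Rₚ := Localization S
  have := Module.mem_support_iff.mp hp
  have hnoeth : IsNoetherianRing Rₚ := IsLocalization.isNoetherianRing S Rₚ ‹_›
  obtain ⟨P, hP, x, hx⟩ : ∃ P : Ideal Rₚ, P.IsPrime ∧ ∃ x : LocalizedModule S Q,
      P = (⊥ : Submodule Rₚ (LocalizedModule S Q)).colon {x} := by
    obtain ⟨P, hP'⟩ := associatedPrimes.nonempty Rₚ (LocalizedModule S Q)
    exact ⟨P, isAssociatedPrime_iff.mp hP'⟩
  obtain ⟨⟨m, s⟩, rfl⟩ := Quotient.exists_rep x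
  have hxmk : (⟦(m, s)⟧ : LocalizedModule S Q) = LocalizedModule.mk m s := rfl
  rw [hxmk] at hx
  have hmemP : ∀ a : Rₚ, a ∈ P ↔ a • LocalizedModule.mk m s = 0 := by
    intro a
    rw [hx, Submodule.mem_colon_singleton, Submodule.mem_bot]
  have hsu : IsUnit (algebraMap R Rₚ (s : R)) := IsLocalization.map_units Rₚ s
  set q₀ := P.comap (algebraMap R Rₚ) with hq₀
  have hq₀prime : q₀.IsPrime := hP.comap (algebraMap R Rₚ)
  have hq₀le : q₀ ≤ p.asIdeal := by
    intro r hr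
    by_contra hrp
    have hu : IsUnit (algebraMap R Rₚ r) :=
      IsLocalization.map_units Rₚ (⟨r, hrp⟩ : p.asIdeal.primeCompl)
    exact hP.ne_top (Ideal.eq_top_of_isUnit_mem _ hr hu)
  have hz : ∀ r : R, r • (LocalizedModule.mk m (1 : S)) = 0 ↔ r ∈ q₀ := by
    intro r
    have h1 : LocalizedModule.mk m (1 : S) = (s : R) • LocalizedModule.mk m s := by
      rw [LocalizedModule.smul'_mk, ← Submonoid.smul_def, LocalizedModule.mk_cancel]
    constructor
    · intro h
      rw [h1, ← mul_smul] at h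
      have : algebraMap R Rₚ (r * (s : R)) ∈ P := by
        rw [hmemP, algebraMap_smul]; exact h
      rw [map_mul] at this
      rcases hP.mem_or_mem this with h' | h'
      · exact h'
      · exact absurd (Ideal.eq_top_of_isUnit_mem _ h' hsu) hP.ne_top
    · intro h
      have h' : algebraMap R Rₚ r • LocalizedModule.mk m s = 0 := (hmemP _).mp h
      rw [algebraMap_smul] at h'
      rw [h1, smul_comm, h', smul_zero]
  obtain ⟨T, hT⟩ : q₀.FG := IsNoetherian.noetherian q₀
  have hkill : ∀ a : R, a ∈ (T : Set R) → ∃ t : S, (t : R) • (a • m) = 0 := by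
    intro a ha
    have : a ∈ q₀ := by rw [← hT]; exact Submodule.subset_span ha
    have h0 : a • (LocalizedModule.mk m (1 : S)) = 0 := (hz a).mpr this
    rw [LocalizedModule.smul'_mk] at h0
    rw [show (0 : LocalizedModule S Q) = LocalizedModule.mk 0 1 from (LocalizedModule.zero_mk 1).symm,
      LocalizedModule.mk_eq] at h0
    obtain ⟨u, hu⟩ := h0
    refine ⟨u, ?_⟩
    simpa [Submonoid.smul_def] using hu
  choose tf htf using hkill
  set t : S := ∏ a ∈ T.attach, tf (a : R) (Finset.mem_coe.mpr a.2) with ht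
  refine ⟨q₀, (t : R) • m, hq₀prime, hq₀le, fun r => ?_⟩
  constructor
  · intro h
    have h' : (r * (t : R)) • LocalizedModule.mk m (1 : S) = 0 := by
      rw [LocalizedModule.smul'_mk, mul_smul, h, LocalizedModule.zero_mk]
    have hrt : r * (t : R) ∈ q₀ := (hz _).mp h'
    rcases hq₀prime.mem_or_mem hrt with h'' | h''
    · exact h''
    · exact absurd (hq₀le h'') t.2
  · intro h
    have hTkill : ∀ a ∈ (T : Set R), a • ((t : R) • m) = 0 := by
      intro a ha
      have haT : a ∈ T := Finset.mem_coe.mp ha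
      obtain ⟨k, hk⟩ := Finset.dvd_prod_of_mem
        (fun b : {x // x ∈ T} => tf (b : R) (Finset.mem_coe.mpr b.2)) (Finset.mem_attach T ⟨a, haT⟩)
      have hk' : (t : R) = (tf a ha : R) * (k : R) := by
        rw [ht, hk]; push_cast; rfl
      rw [smul_smul, hk', show a * ((tf a ha : R) * (k : R)) = (k : R) * ((tf a ha : R) * a) by ring,
        mul_smul, mul_smul, htf a ha, smul_zero]
    have hr' : r ∈ Submodule.span R (T : Set R) := by
      rw [show Submodule.span R (T : Set R) = Ideal.span (T : Set R) from rfl, hT]; exact h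
    exact Submodule.span_induction hTkill (by simp)
      (fun a b _ _ ha hb => by rw [add_smul, ha, hb, add_zero])
      (fun c a _ ha => by rw [smul_eq_mul, mul_smul, ha, smul_zero]) hr'

universe u v

/-- For specialization closed subsets `W₁, W₂ ⊆ Spec R`, an `R`-module `M` satisfies
`Supp M ⊆ W₁ ∪ W₂` iff there is a submodule `N ⊆ M` with `Supp N ⊆ W₁` and
`Supp (M/N) ⊆ W₂`. -/
theorem support_subset_union_iff_exists_submodule
    {R : Type u} [CommRing R] [IsNoetherianRing R]
    (W₁ W₂ : Set (PrimeSpectrum R))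
    (hW₁ : ∀ p q : PrimeSpectrum R, p ∈ W₁ → p.asIdeal ≤ q.asIdeal → q ∈ W₁)
    (hW₂ : ∀ p q : PrimeSpectrum R, p ∈ W₂ → p.asIdeal ≤ q.asIdeal → q ∈ W₂)
    (M : Type v) [AddCommGroup M] [Module R M] :
    Module.support R M ⊆ W₁ ∪ W₂ ↔
      ∃ N : Submodule R M,
        Module.support R ↥N ⊆ W₁ ∧ Module.support R (M ⧸ N) ⊆ W₂ := by
  classical
  constructor
  · intro hsupp
    set N : Submodule R M :=
      { carrier := {m : M | ∀ P : PrimeSpectrum R,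
          (Submodule.span R {m}).annihilator ≤ P.asIdeal → P ∈ W₁}
        zero_mem' := by
          intro P hP
          exact absurd (P.asIdeal.eq_top_iff_one.mpr
            (hP ((Submodule.mem_annihilator_span_singleton _ _).mpr (smul_zero 1))))
            P.isPrime.ne_top
        add_mem' := by
          intro a b ha hb P hP
          have hinf : (Submodule.span R {a}).annihilator ⊓ (Submodule.span R {b}).annihilator
              ≤ (Submodule.span R {a + b}).annihilator := by
            intro r hr
            rw [Submodule.mem_annihilator_span_singleton, smul_add,
              (Submodule.mem_annihilator_span_singleton _ _).mp hr.1,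
              (Submodule.mem_annihilator_span_singleton _ _).mp hr.2, add_zero]
          rcases (Ideal.IsPrime.inf_le P.isPrime).mp (hinf.trans hP) with h | h
          · exact ha P h
          · exact hb P h
        smul_mem' := by
          intro c m hm P hP
          refine hm P (le_trans (fun r hr => ?_) hP)
          rw [Submodule.mem_annihilator_span_singleton] at hr ⊢
          rw [smul_comm, hr, smul_zero] } with hN
    refine ⟨N, ?_, ?_⟩
    · -- Supp N ⊆ W₁
      intro p hp
      obtain ⟨n, hn⟩ := Module.mem_support_iff_exists_annihilator.mp hp
      refine n.2 p (fun r hr => hn ?_)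
      rw [Submodule.mem_annihilator_span_singleton] at hr ⊢
      exact Subtype.ext hr
    · -- Supp (M ⧸ N) ⊆ W₂
      intro p hp
      obtain ⟨q, y, hqprime, hqle, hy⟩ := key_assoc p hp
      have hy0 : y ≠ 0 := fun h =>
        hqprime.ne_top ((Ideal.eq_top_iff_one _).mpr ((hy 1).mp (by rw [h, smul_zero])))
      have hqsupp : (⟨q, hqprime⟩ : PrimeSpectrum R) ∈ Module.support R (M ⧸ N) :=
        Module.mem_support_iff_exists_annihilator.mpr
          ⟨y, fun r hr => (hy r).mp ((Submodule.mem_annihilator_span_singleton _ _).mp hr)⟩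
      have hqM : (⟨q, hqprime⟩ : PrimeSpectrum R) ∈ Module.support R M :=
        Module.support_subset_of_surjective N.mkQ (N.mkQ_surjective) hqsupp
      rcases hsupp hqM with hq1 | hq2
      · -- q ∈ W₁ : then y = 0, contradiction
        exfalso
        obtain ⟨mt, rfl⟩ := N.mkQ_surjective y
        refine hy0 ?_
        rw [Submodule.mkQ_apply, Submodule.Quotient.mk_eq_zero]
        intro P hP
        by_cases hqP : q ≤ P.asIdeal
        · exact hW₁ ⟨q, hqprime⟩ P hq1 hqP
        · obtain ⟨b, hbq, hbP⟩ := SetLike.not_le_iff_exists.mp hqP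
          have hbm : b • mt ∈ N := by
            rw [← Submodule.Quotient.mk_eq_zero]
            have hb0 := (hy b).mpr hbq
            rwa [← map_smul, Submodule.mkQ_apply] at hb0
          refine hbm P (fun r hr => ?_)
          rw [Submodule.mem_annihilator_span_singleton, smul_comm] at hr
          have hrb : r * b ∈ (Submodule.span R {mt}).annihilator := by
            rw [Submodule.mem_annihilator_span_singleton, mul_comm, mul_smul]
            exact hr
          rcases P.isPrime.mem_or_mem (hP hrb) with h | h
          · exact h
          · exact absurd h hbP
      · exact hW₂ ⟨q, hqprime⟩ p hq2 hqle
  · rintro ⟨N, h1, h2⟩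
    rw [Module.support_of_exact (LinearMap.exact_subtype_mkQ N)
      N.injective_subtype N.mkQ_surjective]
    exact Set.union_subset_union h1 h2
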